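/- Let w be positive, radially decreasing and satisfy w(r) = A₀ r^{−1/2} e^{−r}(1+O(1/r)). Then for ξ ∈ ℝ² with |ξ| = L large, ∫_{ℝ²} w(|z|)² w′(|z|) w(|z+ξ|) (z₁/|z|) dz = −c₀ w(L)(1+o(1)) as L → ∞, where c₀ > 0 is a constant depending only on w, and ξ = (−L, 0). -/

import Mathlib

set_option maxHeartbeats 1000000

open MeasureTheory Filter Real

noncomputable abbrev E2 := EuclideanSpace ℝ (Fin 2)

-- derivative of a function strictly decreasing on (0,∞) is ≤ 0 there
lemma aux_deriv_nonpos (w : ℝ → ℝ) (hsm : ContDiff ℝ 1 w)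
    (hdec : StrictAntiOn w (Set.Ioi 0)) {r : ℝ} (hr : 0 < r) : deriv w r ≤ 0 := by
  have hd : HasDerivAt w (deriv w r) r :=
    (hsm.differentiable one_ne_zero r).hasDerivAt
  have h := hasDerivAt_iff_tendsto_slope.mp hd
  have h' : Filter.Tendsto (slope w r) (nhdsWithin r (Set.Ioi r)) (nhds (deriv w r)) :=
    h.mono_left (nhdsWithin_mono r (fun x hx => ne_of_gt hx))
  refine le_of_tendsto h' ?_
  filter_upwards [self_mem_nhdsWithin] with x hx
  have hx' : r < x := hx
  have : w x ≤ w r := le_of_lt (hdec hr (lt_trans hr hx') hx')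
  have hxr : 0 < x - r := by linarith
  rw [slope_def_field]
  have : w x - w r ≤ 0 := by linarith
  exact div_nonpos_of_nonpos_of_nonneg this hxr.le

-- antitone on [0, ∞)
lemma aux_anti (w : ℝ → ℝ) (hsm : ContDiff ℝ 1 w)
    (hdec : StrictAntiOn w (Set.Ioi 0)) :
    ∀ s r : ℝ, 0 ≤ s → s ≤ r → w r ≤ w s := by
  intro s r hs hsr
  rcases eq_or_lt_of_le hsr with rfl | hlt
  · exact le_refl _
  rcases eq_or_lt_of_le hs with rfl | hs'
  · -- s = 0
    have hcont : Filter.Tendsto w (nhdsWithin 0 (Set.Ioi 0)) (nhds (w 0)) :=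
      (hsm.continuous.continuousAt).continuousWithinAt.tendsto
    refine ge_of_tendsto hcont ?_
    filter_upwards [self_mem_nhdsWithin, Ioo_mem_nhdsGT_of_mem (Set.left_mem_Ico.mpr hlt)]
      with x hx hx2
    exact le_of_lt (hdec hx (lt_trans hx hx2.2) hx2.2)
  · exact le_of_lt (hdec hs' (lt_trans hs' hlt) hlt)


-- u r = w r * sqrt r * exp r  → A₀
lemma aux_u_tendsto (A₀ C : ℝ) (hA₀ : 0 < A₀) (w : ℝ → ℝ) (hC : 0 < C)
    (h : ∀ r ≥ 1, |w r - A₀ * r ^ (-(1/2 : ℝ)) * Real.exp (-r)| ≤ C * r ^ (-(3/2 : ℝ)) * Real.exp (-r)) :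
    Filter.Tendsto (fun r => w r * Real.sqrt r * Real.exp r) Filter.atTop (nhds A₀) := by
  rw [show nhds A₀ = nhds (A₀ + 0) by ring_nf]
  have key : ∀ᶠ r in Filter.atTop, ‖w r * Real.sqrt r * Real.exp r - A₀‖ ≤ C / r := by
    filter_upwards [Filter.eventually_ge_atTop (1:ℝ)] with r hr
    have hr0 : (0:ℝ) < r := by linarith
    have h1 := h r hr
    have hsq : Real.sqrt r > 0 := Real.sqrt_pos.mpr hr0
    have hrpow : r ^ (-(1/2 : ℝ)) = (Real.sqrt r)⁻¹ := by
      rw [Real.rpow_neg hr0.le, Real.sqrt_eq_rpow]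
    have hrpow3 : r ^ (-(3/2 : ℝ)) = (Real.sqrt r)⁻¹ / r := by
      rw [show (-(3/2 : ℝ)) = (-(1/2:ℝ)) + (-1 : ℝ) by norm_num,
        Real.rpow_add hr0, hrpow, Real.rpow_neg_one]
      ring
    have hexp : (0:ℝ) < Real.exp r := Real.exp_pos r
    have : |w r * Real.sqrt r * Real.exp r - A₀|
        = |w r - A₀ * r ^ (-(1/2 : ℝ)) * Real.exp (-r)| * (Real.sqrt r * Real.exp r) := by
      rw [← abs_of_pos (mul_pos hsq hexp), ← abs_mul]
      congr 1
      rw [hrpow, Real.exp_neg]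
      field_simp
    rw [Real.norm_eq_abs, this]
    calc |w r - A₀ * r ^ (-(1/2 : ℝ)) * Real.exp (-r)| * (Real.sqrt r * Real.exp r)
        ≤ (C * r ^ (-(3/2 : ℝ)) * Real.exp (-r)) * (Real.sqrt r * Real.exp r) := by
          apply mul_le_mul_of_nonneg_right h1 (by positivity)
      _ = C / r := by
          rw [hrpow3, Real.exp_neg]
          field_simp
  have hlim : Filter.Tendsto (fun r : ℝ => C / r) Filter.atTop (nhds 0) :=
    Filter.Tendsto.div_atTop tendsto_const_nhds Filter.tendsto_id
  have := squeeze_zero_norm' key hlim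
  simpa using Filter.Tendsto.add (tendsto_const_nhds (x := A₀)) this |>.congr (by
    intro r; ring)


lemma aux_ratio (A₀ : ℝ) (hA₀ : 0 < A₀) (w : ℝ → ℝ)
    (hpos : ∀ r > 0, 0 < w r)
    (hu : Filter.Tendsto (fun r => w r * Real.sqrt r * Real.exp r) Filter.atTop (nhds A₀))
    (a b : ℝ) :
    Filter.Tendsto (fun L => w (Real.sqrt ((a - L)^2 + b^2)) / w L) Filter.atTop
      (nhds (Real.exp a)) := by
  set ρ : ℝ → ℝ := fun L => Real.sqrt ((a - L)^2 + b^2) with hρ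
  have hρ_ge : ∀ L, a ≤ L → L - a ≤ ρ L := by
    intro L hL
    have : (L - a)^2 ≤ (a - L)^2 + b^2 := by nlinarith [sq_nonneg b]
    calc L - a = Real.sqrt ((L-a)^2) := (Real.sqrt_sq (by linarith)).symm
      _ ≤ ρ L := Real.sqrt_le_sqrt this
  have hρtop : Filter.Tendsto ρ Filter.atTop Filter.atTop := by
    apply Filter.tendsto_atTop_mono' _ _ (Filter.tendsto_atTop_add_const_right _ (-a) Filter.tendsto_id)
    filter_upwards [Filter.eventually_ge_atTop a] with L hL
    simpa [sub_eq_add_neg] using hρ_ge L hL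
  -- L - ρ L → a
  have hdiff : Filter.Tendsto (fun L => L - ρ L) Filter.atTop (nhds a) := by
    have hid : (fun L => L - ρ L) =ᶠ[Filter.atTop] (fun L => a - b^2 / (ρ L + (L - a))) := by
      filter_upwards [Filter.eventually_gt_atTop a] with L hL
      have h1 : L - a ≤ ρ L := hρ_ge L hL.le
      have hden : 0 < ρ L + (L - a) := by linarith
      have hsq : ρ L ^ 2 = (a - L)^2 + b^2 := Real.sq_sqrt (by positivity)
      have : (ρ L - (L - a)) * (ρ L + (L - a)) = b^2 := by nlinarith [hsq]
      have h2 : ρ L - (L - a) = b^2 / (ρ L + (L - a)) := by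
        field_simp
        linarith [this]
      linarith [h2, (div_nonneg (sq_nonneg b) hden.le)]
    have hlim : Filter.Tendsto (fun L => a - b^2 / (ρ L + (L - a))) Filter.atTop (nhds a) := by
      have hdtop : Filter.Tendsto (fun L => ρ L + (L - a)) Filter.atTop Filter.atTop := by
        apply Filter.tendsto_atTop_mono (fun L => ?_) (Filter.tendsto_atTop_add_const_right _ (-a) Filter.tendsto_id)
        have : 0 ≤ ρ L := Real.sqrt_nonneg _
        simp only [id_eq]
        linarith
      have : Filter.Tendsto (fun L => b^2 / (ρ L + (L - a))) Filter.atTop (nhds 0) :=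
        Filter.Tendsto.div_atTop tendsto_const_nhds hdtop
      simpa using Filter.Tendsto.sub (tendsto_const_nhds (x := a)) this
    exact Filter.Tendsto.congr' hid.symm hlim
  -- sqrt (L / ρ L) → 1
  have hquot : Filter.Tendsto (fun L => Real.sqrt (L / ρ L)) Filter.atTop (nhds 1) := by
    have h1 : Filter.Tendsto (fun L => ρ L / L) Filter.atTop (nhds 1) := by
      have h2 : Filter.Tendsto (fun L => (L - ρ L) / L) Filter.atTop (nhds 0) :=
        Filter.Tendsto.div_atTop hdiff Filter.tendsto_id
      have h3 : (fun L => ρ L / L) =ᶠ[Filter.atTop] (fun L => 1 - (L - ρ L) / L) := by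
        filter_upwards [Filter.eventually_gt_atTop 0] with L hL
        field_simp
        ring
      rw [show (1:ℝ) = 1 - 0 by ring]
      exact Filter.Tendsto.congr' h3.symm (Filter.Tendsto.sub tendsto_const_nhds h2)
    have h4 : Filter.Tendsto (fun L => L / ρ L) Filter.atTop (nhds 1) := by
      have : Filter.Tendsto (fun L => (ρ L / L)⁻¹) Filter.atTop (nhds 1) := by
        simpa using Filter.Tendsto.inv₀ h1 one_ne_zero
      apply this.congr'
      filter_upwards [hρtop.eventually_gt_atTop 0, Filter.eventually_gt_atTop (0:ℝ)] with L h5 h6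
      rw [inv_div]
    have := (Real.continuous_sqrt.tendsto 1).comp h4
    rw [Real.sqrt_one] at this
    exact this
  -- main identity
  have hmain : (fun L => w (ρ L) / w L) =ᶠ[Filter.atTop] (fun L => ((w (ρ L) * Real.sqrt (ρ L) * Real.exp (ρ L)) /
        (w L * Real.sqrt L * Real.exp L)) * Real.sqrt (L / ρ L) * Real.exp (L - ρ L)) := by
    filter_upwards [hρtop.eventually_gt_atTop 0, Filter.eventually_gt_atTop (0:ℝ)] with L h5 h6
    have hwL : 0 < w L := hpos L h6
    have hwρ : 0 < w (ρ L) := hpos _ h5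
    have hsL : 0 < Real.sqrt L := Real.sqrt_pos.mpr h6
    have hsρ : 0 < Real.sqrt (ρ L) := Real.sqrt_pos.mpr h5
    rw [Real.sqrt_div h6.le, Real.exp_sub]
    field_simp
  have hA : Filter.Tendsto (fun L => (w (ρ L) * Real.sqrt (ρ L) * Real.exp (ρ L)) /
      (w L * Real.sqrt L * Real.exp L)) Filter.atTop (nhds 1) := by
    have h1 := hu.comp hρtop
    have := Filter.Tendsto.div h1 hu (ne_of_gt hA₀)
    rw [div_self (ne_of_gt hA₀)] at this
    exact this
  have hexp : Filter.Tendsto (fun L => Real.exp (L - ρ L)) Filter.atTop (nhds (Real.exp a)) :=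
    (Real.continuous_exp.tendsto a).comp hdiff
  have h9 := ((hA.mul hquot).mul hexp)
  rw [show (1:ℝ) * 1 * Real.exp a = Real.exp a by ring] at h9
  exact Filter.Tendsto.congr' hmain.symm h9


lemma aux_norm2 (z : E2) : ‖z‖ = Real.sqrt ((z 0)^2 + (z 1)^2) := by
  rw [EuclideanSpace.norm_eq]
  simp [Fin.sum_univ_two, sq_abs]

lemma aux_norm_shift (z : E2) (L : ℝ) :
    ‖z + (-L) • EuclideanSpace.single (0:Fin 2) (1:ℝ)‖ = Real.sqrt ((z 0 - L)^2 + (z 1)^2) := by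
  rw [aux_norm2]
  congr 1
  have h0 : (z + (-L) • EuclideanSpace.single (0:Fin 2) (1:ℝ)) 0 = z 0 - L := by
    simp [EuclideanSpace.single_apply]
    ring
  have h1 : (z + (-L) • EuclideanSpace.single (0:Fin 2) (1:ℝ)) 1 = z 1 := by
    simp [EuclideanSpace.single_apply]
  rw [h0, h1]

lemma aux_coord_le (z : E2) : |z 0| ≤ ‖z‖ := by
  rw [aux_norm2]
  rw [show |z 0| = Real.sqrt ((z 0)^2) by rw [Real.sqrt_sq_eq_abs]]
  exact Real.sqrt_le_sqrt (by nlinarith [sq_nonneg (z 1)])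

lemma aux_coord_div_le (z : E2) : |z 0 / ‖z‖| ≤ 1 := by
  rcases eq_or_ne ‖z‖ 0 with h | h
  · simp [h]
  · rw [abs_div, abs_of_nonneg (norm_nonneg z)]
    exact div_le_one_of_le₀ (aux_coord_le z) (norm_nonneg z)


lemma aux_poly_exp (t : ℝ) (ht : 0 ≤ t) :
    (1 + t) * Real.exp (-t) ≤ 256 * (1 + t) ^ (-(3:ℝ)) := by
  have h1t : (0:ℝ) < 1 + t := by linarith
  have h4 : (1 + t) ≤ 4 * Real.exp (t/4) := by
    have := Real.add_one_le_exp (t/4)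
    nlinarith [Real.exp_pos (t/4)]
  have h5 : (1+t)^4 ≤ 256 * Real.exp t := by
    calc (1+t)^4 ≤ (4*Real.exp (t/4))^4 := by
          apply pow_le_pow_left₀ (by linarith) h4
      _ = 256 * (Real.exp (t/4))^4 := by ring
      _ = 256 * Real.exp t := by
          rw [← Real.exp_nat_mul]
          push_cast
          ring_nf
  have h6 : (1 + t) ^ (-(3:ℝ)) = ((1+t)^(3:ℕ))⁻¹ := by
    rw [show (-(3:ℝ)) = -((3:ℕ):ℝ) by norm_num, Real.rpow_neg h1t.le, Real.rpow_natCast]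
  rw [h6, Real.exp_neg, ← div_eq_mul_inv,
    show (256:ℝ) * ((1+t)^(3:ℕ))⁻¹ = 256 / (1+t)^(3:ℕ) from (div_eq_mul_inv _ _).symm,
    div_le_div_iff₀ (Real.exp_pos t) (by positivity)]
  have heq : (1+t) * (1+t)^(3:ℕ) = (1+t)^4 := by ring
  rw [heq]
  exact h5

lemma aux_g_integrable :
    Integrable (fun z : E2 => (1 + ‖z‖) * Real.exp (-‖z‖)) := by
  have hfin : ((Module.finrank ℝ E2 : ℝ)) < 3 := by
    rw [finrank_euclideanSpace]
    norm_num
  have hint := (integrable_one_add_norm (E := E2) (μ := volume) hfin).const_mul 256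
  refine hint.mono' ?_ ?_
  · exact (Continuous.aestronglyMeasurable (by continuity))
  · filter_upwards with z
    rw [Real.norm_eq_abs, abs_of_nonneg (by positivity)]
    exact aux_poly_exp ‖z‖ (norm_nonneg z)


lemma aux_wbounds (A₀ C : ℝ) (hA₀ : 0 < A₀) (hC : 0 < C) (w : ℝ → ℝ)
    (h : ∀ r ≥ 1,
      |w r - A₀ * r ^ (-(1/2 : ℝ)) * Real.exp (-r)| ≤ C * r ^ (-(3/2 : ℝ)) * Real.exp (-r) ∧
      |deriv w r + A₀ * r ^ (-(1/2 : ℝ)) * Real.exp (-r)| ≤ C * r ^ (-(3/2 : ℝ)) * Real.exp (-r))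
    {r : ℝ} (hr : 1 + 2*C/A₀ ≤ r) :
    w r ≤ 2*A₀ * (Real.exp (-r)/Real.sqrt r) ∧
    A₀/2 * (Real.exp (-r)/Real.sqrt r) ≤ w r ∧
    deriv w r ≤ -(A₀/2) * (Real.exp (-r)/Real.sqrt r) ∧
    |deriv w r| ≤ 2*A₀ * (Real.exp (-r)/Real.sqrt r) := by
  have hr1 : (1:ℝ) ≤ r := by nlinarith [div_nonneg (by nlinarith : (0:ℝ) ≤ 2*C) hA₀.le]
  have hr0 : (0:ℝ) < r := by linarith
  have hsq : 0 < Real.sqrt r := Real.sqrt_pos.mpr hr0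
  have hrpow : r ^ (-(1/2 : ℝ)) = (Real.sqrt r)⁻¹ := by
    rw [Real.rpow_neg hr0.le, Real.sqrt_eq_rpow]
  have hrpow3 : r ^ (-(3/2 : ℝ)) = (Real.sqrt r)⁻¹ / r := by
    rw [show (-(3/2 : ℝ)) = (-(1/2:ℝ)) + (-1 : ℝ) by norm_num,
      Real.rpow_add hr0, hrpow, Real.rpow_neg_one]; ring
  have hexp : (0:ℝ) < Real.exp (-r) := Real.exp_pos _
  obtain ⟨h1, h2⟩ := h r hr1
  have hmain : A₀ * r ^ (-(1/2 : ℝ)) * Real.exp (-r) = A₀ * (Real.exp (-r)/Real.sqrt r) := by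
    rw [hrpow]; ring
  have herr : C * r ^ (-(3/2 : ℝ)) * Real.exp (-r) ≤ A₀/2 * (Real.exp (-r)/Real.sqrt r) := by
    rw [hrpow3]
    rw [show C * ((Real.sqrt r)⁻¹ / r) * Real.exp (-r) = (C / r) * (Real.exp (-r)/Real.sqrt r) by ring]
    apply mul_le_mul_of_nonneg_right _ (by positivity)
    rw [div_le_iff₀ hr0]
    have : 2*C/A₀ ≤ r := by linarith
    rw [div_le_iff₀ hA₀] at this
    nlinarith
  rw [hmain] at h1 h2
  rw [abs_le] at h1 h2
  refine ⟨by nlinarith [h1.2, herr], by nlinarith [h1.1, herr], by nlinarith [h2.2, herr], ?_⟩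
  rw [abs_le]
  constructor <;> nlinarith [h2.1, h2.2, herr, mul_pos hA₀ (div_pos hexp hsq)]


lemma aux_K1 (A₀ C : ℝ) (hA₀ : 0 < A₀) (hC : 0 < C) (w : ℝ → ℝ)
    (hsm : ContDiff ℝ 1 w)
    (hanti : ∀ s r : ℝ, 0 ≤ s → s ≤ r → w r ≤ w s)
    (hwb : ∀ {r : ℝ}, 1 + 2*C/A₀ ≤ r →
      w r ≤ 2*A₀ * (Real.exp (-r)/Real.sqrt r) ∧
      A₀/2 * (Real.exp (-r)/Real.sqrt r) ≤ w r ∧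
      deriv w r ≤ -(A₀/2) * (Real.exp (-r)/Real.sqrt r) ∧
      |deriv w r| ≤ 2*A₀ * (Real.exp (-r)/Real.sqrt r))
    (hwnn : ∀ r : ℝ, 0 ≤ r → 0 ≤ w r) :
    ∃ K₁ : ℝ, 0 < K₁ ∧ ∀ r : ℝ, 0 ≤ r → (w r)^2 * |deriv w r| ≤ K₁ * Real.exp (-(3*r)) := by
  set R₀ : ℝ := 1 + 2*C/A₀ with hR₀
  have hR₀pos : 0 < R₀ := by positivity
  obtain ⟨M, hM⟩ := (isCompact_Icc (a := (0:ℝ)) (b := R₀)).exists_bound_of_continuousOn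
    ((hsm.continuous_deriv le_rfl).continuousOn)
  set M' : ℝ := max M 0 with hM'
  set K₁ : ℝ := max (8*A₀^3) ((w 0)^2 * M' * Real.exp (3*R₀)) + 1 with hK₁
  refine ⟨K₁, by positivity, ?_⟩
  intro r hr
  have hwr_nonneg : 0 ≤ w r := hwnn r hr
  have hexppos : (0:ℝ) < Real.exp (-r) := Real.exp_pos _
  rcases le_or_gt R₀ r with hcase | hcase
  · have hb := hwb hcase
    have hr1 : (1:ℝ) ≤ r := le_trans (by simp [hR₀]; positivity) hcase
    have hsq1 : (1:ℝ) ≤ Real.sqrt r := by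
      rw [show (1:ℝ) = Real.sqrt 1 by simp]; exact Real.sqrt_le_sqrt hr1
    have hdivle : Real.exp (-r)/Real.sqrt r ≤ Real.exp (-r) :=
      div_le_self hexppos.le hsq1
    have hw_le : w r ≤ 2*A₀ * Real.exp (-r) :=
      le_trans hb.1 (by nlinarith)
    have hd_le : |deriv w r| ≤ 2*A₀ * Real.exp (-r) :=
      le_trans hb.2.2.2 (by nlinarith)
    have h2 : (w r)^2 ≤ (2*A₀*Real.exp (-r))^2 := by nlinarith
    have hstep : (w r)^2 * |deriv w r| ≤ (2*A₀*Real.exp (-r))^2 * (2*A₀*Real.exp (-r)) :=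
      mul_le_mul h2 hd_le (abs_nonneg _) (by positivity)
    refine le_trans hstep ?_
    have hexp3 : Real.exp (-(3*r)) = Real.exp (-r) * Real.exp (-r) * Real.exp (-r) := by
      rw [← Real.exp_add, ← Real.exp_add]; ring_nf
    have h8 : (2*A₀*Real.exp (-r))^2 * (2*A₀*Real.exp (-r))
        = 8*A₀^3 * Real.exp (-(3*r)) := by rw [hexp3]; ring
    rw [h8]
    apply mul_le_mul_of_nonneg_right _ (Real.exp_pos _).le
    have := le_max_left (8*A₀^3) ((w 0)^2 * M' * Real.exp (3*R₀))
    linarith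
  · have hw_le : w r ≤ w 0 := hanti 0 r le_rfl hr
    have hd_le : |deriv w r| ≤ M' :=
      le_trans (le_trans (le_of_eq (Real.norm_eq_abs _).symm) (hM r ⟨hr, hcase.le⟩)) (le_max_left _ _)
    have hM'0 : (0:ℝ) ≤ M' := le_max_right _ _
    have hw0nn : 0 ≤ w 0 := hwnn 0 le_rfl
    have h1 : (w r)^2 * |deriv w r| ≤ (w 0)^2 * M' :=
      mul_le_mul (by nlinarith) hd_le (abs_nonneg _) (sq_nonneg _)
    have h2 : (1:ℝ) ≤ Real.exp (3*R₀) * Real.exp (-(3*r)) := by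
      rw [← Real.exp_add]; apply Real.one_le_exp; linarith
    have h3 : (w 0)^2 * M' ≤ (w 0)^2 * M' * (Real.exp (3*R₀) * Real.exp (-(3*r))) :=
      le_mul_of_one_le_right (by positivity) h2
    refine le_trans h1 (le_trans h3 ?_)
    rw [show (w 0)^2 * M' * (Real.exp (3*R₀) * Real.exp (-(3*r)))
        = ((w 0)^2 * M' * Real.exp (3*R₀)) * Real.exp (-(3*r)) by ring]
    apply mul_le_mul_of_nonneg_right _ (Real.exp_pos _).le
    have := le_max_right (8*A₀^3) ((w 0)^2 * M' * Real.exp (3*R₀))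
    linarith


lemma aux_dom (A₀ C K₁ : ℝ) (hA₀ : 0 < A₀) (hC : 0 < C) (hK₁ : 0 < K₁) (w : ℝ → ℝ)
    (hwb : ∀ {r : ℝ}, 1 + 2*C/A₀ ≤ r →
      w r ≤ 2*A₀ * (Real.exp (-r)/Real.sqrt r) ∧
      A₀/2 * (Real.exp (-r)/Real.sqrt r) ≤ w r ∧
      deriv w r ≤ -(A₀/2) * (Real.exp (-r)/Real.sqrt r) ∧
      |deriv w r| ≤ 2*A₀ * (Real.exp (-r)/Real.sqrt r))
    (hanti : ∀ s r : ℝ, 0 ≤ s → s ≤ r → w r ≤ w s)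
    (hwnn : ∀ r : ℝ, 0 ≤ r → 0 ≤ w r)
    (hK₁b : ∀ r : ℝ, 0 ≤ r → (w r)^2 * |deriv w r| ≤ K₁ * Real.exp (-(3*r)))
    (L : ℝ) (hL : 2*(1 + 2*C/A₀) + 2 ≤ L) (z : E2) :
    |(w ‖z‖)^2 * deriv w ‖z‖ * w ‖z + (-L) • (EuclideanSpace.single (0:Fin 2) (1:ℝ))‖ * (z 0 / ‖z‖)|
      ≤ ((8*K₁ + 2*K₁*(w 0)/A₀) * ((1+‖z‖) * Real.exp (-‖z‖))) * w L := by
  set R₀ : ℝ := 1 + 2*C/A₀ with hR₀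
  have hR₀1 : (1:ℝ) ≤ R₀ := le_add_of_nonneg_right (by positivity)
  have hR₀0 : (0:ℝ) < R₀ := lt_of_lt_of_le one_pos hR₀1
  have hL0 : (0:ℝ) < L := by linarith
  have hLR : R₀ ≤ L := by linarith
  set r : ℝ := ‖z‖ with hrdef
  set ρ : ℝ := ‖z + (-L) • (EuclideanSpace.single (0:Fin 2) (1:ℝ))‖ with hρdef
  have hr0 : 0 ≤ r := norm_nonneg _
  have hρ0 : 0 ≤ ρ := norm_nonneg _
  have hwρ0 : 0 ≤ w ρ := hwnn ρ hρ0
  have hwL : A₀/2 * (Real.exp (-L)/Real.sqrt L) ≤ w L := (hwb hLR).2.1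
  have hwLpos : 0 < w L := lt_of_lt_of_le (by positivity) hwL
  have hw0 : 0 ≤ w 0 := hwnn 0 le_rfl
  have h1 : |(w r)^2 * deriv w r * w ρ * (z 0 / r)| ≤ (w r)^2 * |deriv w r| * w ρ := by
    rw [abs_mul, abs_mul, abs_mul, abs_of_nonneg (sq_nonneg (w r)), abs_of_nonneg hwρ0]
    calc (w r)^2 * |deriv w r| * w ρ * |z 0 / r|
        ≤ (w r)^2 * |deriv w r| * w ρ * 1 :=
          mul_le_mul_of_nonneg_left (aux_coord_div_le z) (by positivity)
      _ = (w r)^2 * |deriv w r| * w ρ := mul_one _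
  have h2 : (w r)^2 * |deriv w r| * w ρ ≤ K₁ * Real.exp (-(3*r)) * w ρ :=
    mul_le_mul_of_nonneg_right (hK₁b r hr0) hwρ0
  refine le_trans h1 (le_trans h2 ?_)
  rcases le_or_gt r (L/2) with hcase | hcase
  · -- far field
    have hLr : L - r ≤ ρ := by
      have hxy : ‖(-L) • (EuclideanSpace.single (0:Fin 2) (1:ℝ))‖ ≤ ρ + r := by
        calc ‖(-L) • (EuclideanSpace.single (0:Fin 2) (1:ℝ))‖
            = ‖(z + (-L) • (EuclideanSpace.single (0:Fin 2) (1:ℝ))) - z‖ := by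
              rw [add_sub_cancel_left]
          _ ≤ ρ + r := norm_sub_le _ _
      have hnorm : ‖(-L) • (EuclideanSpace.single (0:Fin 2) (1:ℝ))‖ = L := by
        rw [norm_smul, EuclideanSpace.norm_single]
        simp [abs_of_pos hL0]
      linarith
    have hLrR : R₀ ≤ L - r := by linarith
    have hwρle : w ρ ≤ w (L - r) := hanti (L - r) ρ (by linarith) hLr
    have hwLr : w (L-r) ≤ 2*A₀ * (Real.exp (-(L-r))/Real.sqrt (L-r)) := (hwb hLrR).1
    have hsL : 0 < Real.sqrt L := Real.sqrt_pos.mpr hL0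
    have hsLr : 0 < Real.sqrt (L-r) := Real.sqrt_pos.mpr (by linarith)
    have hsqrts : Real.sqrt L ≤ 2 * Real.sqrt (L-r) := by
      have h4 : Real.sqrt (4*(L-r)) = 2 * Real.sqrt (L-r) := by
        rw [show (4:ℝ)*(L-r) = (2*Real.sqrt (L-r))^2 by
          rw [mul_pow, Real.sq_sqrt (by linarith : (0:ℝ) ≤ L - r)]; ring]
        exact Real.sqrt_sq (by positivity)
      rw [← h4]; exact Real.sqrt_le_sqrt (by linarith)
    have hkey : 2*A₀ * (Real.exp (-(L-r))/Real.sqrt (L-r))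
        ≤ 8 * Real.exp r * (A₀/2 * (Real.exp (-L)/Real.sqrt L)) := by
      have he : Real.exp (-(L-r)) = Real.exp r * Real.exp (-L) := by
        rw [← Real.exp_add]; ring_nf
      have h9 : 1/Real.sqrt (L-r) ≤ 2/Real.sqrt L := by
        rw [div_le_div_iff₀ hsLr hsL]; linarith
      calc 2*A₀ * (Real.exp (-(L-r))/Real.sqrt (L-r))
          = (2*A₀*Real.exp r*Real.exp (-L)) * (1/Real.sqrt (L-r)) := by rw [he]; ring
        _ ≤ (2*A₀*Real.exp r*Real.exp (-L)) * (2/Real.sqrt L) :=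
            mul_le_mul_of_nonneg_left h9 (by positivity)
        _ = 8 * Real.exp r * (A₀/2 * (Real.exp (-L)/Real.sqrt L)) := by ring
    have hwρ_wL : w ρ ≤ 8 * Real.exp r * w L :=
      le_trans hwρle (le_trans hwLr (le_trans hkey
        (mul_le_mul_of_nonneg_left hwL (by positivity))))
    have hexp2 : Real.exp (-(3*r)) * Real.exp r = Real.exp (-(2*r)) := by
      rw [← Real.exp_add]; ring_nf
    have h10 : Real.exp (-(2*r)) ≤ (1+r) * Real.exp (-r) := by
      have := Real.exp_le_exp.mpr (show -(2*r) ≤ -r by linarith)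
      nlinarith [Real.exp_pos (-r)]
    calc K₁ * Real.exp (-(3*r)) * w ρ
        ≤ K₁ * Real.exp (-(3*r)) * (8 * Real.exp r * w L) :=
          mul_le_mul_of_nonneg_left hwρ_wL (by positivity)
      _ = 8*K₁ * (Real.exp (-(3*r)) * Real.exp r) * w L := by ring
      _ = 8*K₁ * Real.exp (-(2*r)) * w L := by rw [hexp2]
      _ ≤ 8*K₁ * ((1+r) * Real.exp (-r)) * w L := by
          apply mul_le_mul_of_nonneg_right _ hwLpos.le
          exact mul_le_mul_of_nonneg_left h10 (by positivity)
      _ ≤ ((8*K₁ + 2*K₁*(w 0)/A₀) * ((1+r) * Real.exp (-r))) * w L := by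
          apply mul_le_mul_of_nonneg_right _ hwLpos.le
          apply mul_le_mul_of_nonneg_right _ (by positivity)
          have : 0 ≤ 2*K₁*(w 0)/A₀ := by positivity
          linarith
  · -- near field
    have hwρle : w ρ ≤ w 0 := hanti 0 ρ le_rfl hρ0
    have hsL : 0 < Real.sqrt L := Real.sqrt_pos.mpr hL0
    have hsq : Real.sqrt L ≤ 1 + r := by
      calc Real.sqrt L ≤ Real.sqrt ((1+r)^2) := Real.sqrt_le_sqrt (by nlinarith)
        _ = 1 + r := Real.sqrt_sq (by linarith)
    have hmain : K₁ * Real.exp (-(3*r)) * w 0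
        ≤ (2*K₁*(w 0)/A₀ * ((1+r)*Real.exp (-r))) * (A₀/2 * (Real.exp (-L)/Real.sqrt L)) := by
      have hrw : (2*K₁*(w 0)/A₀ * ((1+r)*Real.exp (-r))) * (A₀/2 * (Real.exp (-L)/Real.sqrt L))
          = (K₁ * w 0 * (Real.exp (-r) * Real.exp (-L))) * ((1+r)/Real.sqrt L) := by
        field_simp
      rw [hrw]
      have h1r : (1:ℝ) ≤ (1+r)/Real.sqrt L := by
        rw [le_div_iff₀ hsL]; linarith
      have h2 : Real.exp (-(3*r)) ≤ Real.exp (-r) * Real.exp (-L) := by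
        rw [← Real.exp_add]; exact Real.exp_le_exp.mpr (by linarith)
      calc K₁ * Real.exp (-(3*r)) * w 0 = K₁ * w 0 * Real.exp (-(3*r)) := by ring
        _ ≤ K₁ * w 0 * (Real.exp (-r) * Real.exp (-L)) :=
            mul_le_mul_of_nonneg_left h2 (by positivity)
        _ ≤ (K₁ * w 0 * (Real.exp (-r) * Real.exp (-L))) * ((1+r)/Real.sqrt L) :=
            le_mul_of_one_le_right (by positivity) h1r
    calc K₁ * Real.exp (-(3*r)) * w ρ
        ≤ K₁ * Real.exp (-(3*r)) * w 0 := mul_le_mul_of_nonneg_left hwρle (by positivity)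
      _ ≤ (2*K₁*(w 0)/A₀ * ((1+r)*Real.exp (-r))) * (A₀/2 * (Real.exp (-L)/Real.sqrt L)) := hmain
      _ ≤ (2*K₁*(w 0)/A₀ * ((1+r)*Real.exp (-r))) * w L :=
          mul_le_mul_of_nonneg_left hwL (by positivity)
      _ ≤ ((8*K₁ + 2*K₁*(w 0)/A₀) * ((1+r) * Real.exp (-r))) * w L := by
          apply mul_le_mul_of_nonneg_right _ hwLpos.le
          apply mul_le_mul_of_nonneg_right _ (by positivity)
          linarith


noncomputable def refl0 : E2 ≃ₗᵢ[ℝ] E2 :=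
  LinearIsometryEquiv.piLpCongrRight 2
    (fun i => if i = 0 then LinearIsometryEquiv.neg ℝ else LinearIsometryEquiv.refl ℝ ℝ)

lemma refl0_apply0 (z : E2) : (refl0 z) 0 = -(z 0) := by
  simp [refl0, LinearIsometryEquiv.piLpCongrRight_apply]

lemma refl0_norm (z : E2) : ‖refl0 z‖ = ‖z‖ := refl0.norm_map z

lemma refl0_integral (g : E2 → ℝ) : ∫ z, g (refl0 z) = ∫ z, g z :=
  (refl0.measurePreserving).integral_comp refl0.toHomeomorph.measurableEmbedding g

lemma refl0_integrable {g : E2 → ℝ} (hg : Integrable g) : Integrable (fun z => g (refl0 z)) := by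
  have h1 : Integrable g (Measure.map (refl0 : E2 → E2) volume) := by
    rw [refl0.measurePreserving.map_eq]; exact hg
  exact (MeasurableEmbedding.integrable_map_iff
    (refl0.toHomeomorph.measurableEmbedding) (μ := volume) (g := g)).mp h1

lemma aux_cont_coord : Continuous fun z : E2 => z 0 :=
  (EuclideanSpace.proj (0 : Fin 2)).continuous

lemma aux_sign (A₀ C : ℝ) (hA₀ : 0 < A₀) (hC : 0 < C) (w : ℝ → ℝ)
    (hsm : ContDiff ℝ 1 w) (hpos : ∀ r > 0, 0 < w r) (hdec : StrictAntiOn w (Set.Ioi 0))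
    (hwb : ∀ {r : ℝ}, 1 + 2*C/A₀ ≤ r →
      w r ≤ 2*A₀ * (Real.exp (-r)/Real.sqrt r) ∧
      A₀/2 * (Real.exp (-r)/Real.sqrt r) ≤ w r ∧
      deriv w r ≤ -(A₀/2) * (Real.exp (-r)/Real.sqrt r) ∧
      |deriv w r| ≤ 2*A₀ * (Real.exp (-r)/Real.sqrt r))
    (hGint : Integrable (fun z : E2 =>
      (w ‖z‖)^2 * deriv w ‖z‖ * Real.exp (z 0) * (z 0 / ‖z‖))) :
    (∫ z : E2, (w ‖z‖)^2 * deriv w ‖z‖ * Real.exp (z 0) * (z 0 / ‖z‖)) < 0 := by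
  obtain ⟨R₀, hR₀1, hwb⟩ : ∃ R₀ : ℝ, 1 ≤ R₀ ∧ ∀ {r : ℝ}, R₀ ≤ r →
      (w r ≤ 2*A₀ * (Real.exp (-r)/Real.sqrt r) ∧
      A₀/2 * (Real.exp (-r)/Real.sqrt r) ≤ w r ∧
      deriv w r ≤ -(A₀/2) * (Real.exp (-r)/Real.sqrt r) ∧
      |deriv w r| ≤ 2*A₀ * (Real.exp (-r)/Real.sqrt r)) :=
    ⟨1 + 2*C/A₀, le_add_of_nonneg_right (by positivity), fun {r} hr => hwb hr⟩
  set G : E2 → ℝ := fun z => (w ‖z‖)^2 * deriv w ‖z‖ * Real.exp (z 0) * (z 0 / ‖z‖) with hG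
  set H : E2 → ℝ := fun z => -(G z + G (refl0 z)) with hH
  have hGrefl : ∀ z : E2, G (refl0 z)
      = (w ‖z‖)^2 * deriv w ‖z‖ * Real.exp (-(z 0)) * (-(z 0) / ‖z‖) := by
    intro z
    rw [hG]
    simp only [refl0_norm, refl0_apply0]
  have hHnn : ∀ z : E2, 0 ≤ H z := by
    intro z
    rcases eq_or_ne z 0 with rfl | hz
    · simp [hH, hG]
    · have hr : 0 < ‖z‖ := norm_pos_iff.mpr hz
      have hd : deriv w ‖z‖ ≤ 0 := aux_deriv_nonpos w hsm hdec hr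
      have hkey : 0 ≤ (z 0) * (Real.exp (z 0) - Real.exp (-(z 0))) := by
        rcases le_or_gt 0 (z 0) with h | h
        · have : Real.exp (-(z 0)) ≤ Real.exp (z 0) := Real.exp_le_exp.mpr (by linarith)
          nlinarith
        · have : Real.exp (z 0) ≤ Real.exp (-(z 0)) := Real.exp_le_exp.mpr (by linarith)
          nlinarith
      have hform : H z = (w ‖z‖)^2 * (-deriv w ‖z‖) *
          ((z 0) * (Real.exp (z 0) - Real.exp (-(z 0)))) / ‖z‖ := by
        rw [hH, hG]; simp only [refl0_norm, refl0_apply0]; field_simp; ring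
      rw [hform]
      exact div_nonneg (mul_nonneg (mul_nonneg (sq_nonneg _) (by linarith)) hkey) hr.le
  have hGrint : Integrable (fun z => G (refl0 z)) := refl0_integrable hGint
  have hHint : Integrable H := ((hGint.add hGrint).neg)
  have hHpos : 0 < ∫ z, H z := by
    rw [integral_pos_iff_support_of_nonneg_ae (Filter.Eventually.of_forall hHnn) hHint]
    set U : Set E2 := ((fun z : E2 => ‖z‖) ⁻¹' (Set.Ioo R₀ (R₀+1))) ∩
      ((fun z : E2 => z 0) ⁻¹' (Set.Ioi 0)) with hU
    have hUopen : IsOpen U :=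
      (isOpen_Ioo.preimage continuous_norm).inter (isOpen_Ioi.preimage aux_cont_coord)
    have hUne : U.Nonempty := by
      refine ⟨EuclideanSpace.single (0 : Fin 2) (R₀ + 1/2), ?_, ?_⟩
      · simp only [Set.mem_preimage, EuclideanSpace.norm_single, Real.norm_eq_abs]
        rw [abs_of_pos (by linarith)]
        exact ⟨by linarith, by linarith⟩
      · simp only [Set.mem_preimage, EuclideanSpace.single_apply, Set.mem_Ioi]
        norm_num
        linarith
    have hUsub : U ⊆ Function.support H := by
      intro z hz
      obtain ⟨hz1, hz2⟩ := hz
      simp only [Set.mem_preimage, Set.mem_Ioo] at hz1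
      simp only [Set.mem_preimage, Set.mem_Ioi] at hz2
      have hr : 0 < ‖z‖ := by linarith [hz1.1]
      have hd : deriv w ‖z‖ < 0 := by
        have := (hwb hz1.1.le).2.2.1
        have h2 : 0 < A₀/2 * (Real.exp (-‖z‖)/Real.sqrt ‖z‖) := by positivity
        linarith
      have hkey : 0 < (z 0) * (Real.exp (z 0) - Real.exp (-(z 0))) := by
        have : Real.exp (-(z 0)) < Real.exp (z 0) := Real.exp_lt_exp.mpr (by linarith)
        nlinarith
      have hform : H z = (w ‖z‖)^2 * (-deriv w ‖z‖) *
          ((z 0) * (Real.exp (z 0) - Real.exp (-(z 0)))) / ‖z‖ := by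
        rw [hH, hG]; simp only [refl0_norm, refl0_apply0]; field_simp; ring
      have hwz : 0 < w ‖z‖ := hpos _ hr
      have : 0 < H z := by
        rw [hform]
        exact div_pos (mul_pos (mul_pos (pow_pos hwz 2) (by linarith)) hkey) hr
      exact ne_of_gt this
    calc (0:ENNReal) < volume U := hUopen.measure_pos volume hUne
      _ ≤ volume (Function.support H) := measure_mono hUsub
  have hsum : ∫ z, H z = -((∫ z, G z) + ∫ z, G (refl0 z)) := by
    rw [hH]
    rw [integral_neg, integral_add hGint hGrint]
  rw [hsum, refl0_integral] at hHpos
  linarith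


lemma refl0_apply1 (z : E2) : (refl0 z) 1 = z 1 := by
  simp [refl0, LinearIsometryEquiv.piLpCongrRight_apply]

lemma aux_meas (w : ℝ → ℝ) (hw : Continuous w) (hw' : Continuous (deriv w)) :
    Measurable (fun z : E2 => (w ‖z‖)^2 * deriv w ‖z‖ * (z 0 / ‖z‖)) := by
  have h1 : Measurable fun z : E2 => (w ‖z‖)^2 * deriv w ‖z‖ :=
    (((hw.comp continuous_norm).pow 2).mul (hw'.comp continuous_norm)).measurable
  exact h1.mul (aux_cont_coord.measurable.div continuous_norm.measurable)

theorem stmt19 (A₀ : ℝ) (hA₀ : 0 < A₀) (w : ℝ → ℝ)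
    (hsm : ContDiff ℝ 1 w)
    (hpos : ∀ r > 0, 0 < w r) (hdec : StrictAntiOn w (Set.Ioi 0))
    (hasym : ∃ C : ℝ, 0 < C ∧ ∀ r ≥ 1,
      |w r - A₀ * r ^ (-(1/2 : ℝ)) * Real.exp (-r)| ≤ C * r ^ (-(3/2 : ℝ)) * Real.exp (-r) ∧
      |deriv w r + A₀ * r ^ (-(1/2 : ℝ)) * Real.exp (-r)| ≤ C * r ^ (-(3/2 : ℝ)) * Real.exp (-r)) :
    ∃ c₀ > 0, Filter.Tendsto (fun L : ℝ =>
      (∫ z : EuclideanSpace ℝ (Fin 2),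
        (w ‖z‖)^2 * deriv w ‖z‖ * w ‖z + (-L) • (EuclideanSpace.single (0 : Fin 2) (1 : ℝ))‖ * (z 0 / ‖z‖)) / w L)
      Filter.atTop (nhds (-c₀)) := by
  obtain ⟨C, hC, h⟩ := hasym
  -- basic monotonicity / positivity facts
  have hanti : ∀ s r : ℝ, 0 ≤ s → s ≤ r → w r ≤ w s := aux_anti w hsm hdec
  have hwnn : ∀ r : ℝ, 0 ≤ r → 0 ≤ w r := by
    intro r hr
    rcases eq_or_lt_of_le hr with rfl | hr'
    · exact le_trans (hpos 1 one_pos).le (hanti 0 1 le_rfl one_pos.le)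
    · exact (hpos r hr').le
  have hwb : ∀ {r : ℝ}, 1 + 2*C/A₀ ≤ r →
      w r ≤ 2*A₀ * (Real.exp (-r)/Real.sqrt r) ∧
      A₀/2 * (Real.exp (-r)/Real.sqrt r) ≤ w r ∧
      deriv w r ≤ -(A₀/2) * (Real.exp (-r)/Real.sqrt r) ∧
      |deriv w r| ≤ 2*A₀ * (Real.exp (-r)/Real.sqrt r) :=
    fun {r} hr => aux_wbounds A₀ C hA₀ hC w h hr
  obtain ⟨K₁, hK₁, hK₁b⟩ := aux_K1 A₀ C hA₀ hC w hsm hanti (fun {r} hr => hwb hr) hwnn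
  have hu := aux_u_tendsto A₀ C hA₀ w hC (fun r hr => (h r hr).1)
  -- the limiting integrand
  set G : E2 → ℝ := fun z => (w ‖z‖)^2 * deriv w ‖z‖ * Real.exp (z 0) * (z 0 / ‖z‖) with hGdef
  have hwcont : Continuous w := hsm.continuous
  have hw'cont : Continuous (deriv w) := hsm.continuous_deriv le_rfl
  have hGmeas : AEStronglyMeasurable G volume := by
    apply Measurable.aestronglyMeasurable
    have h1 : Measurable fun z : E2 => (w ‖z‖)^2 * deriv w ‖z‖ * Real.exp (z 0) :=
      ((((hwcont.comp continuous_norm).pow 2).mul (hw'cont.comp continuous_norm)).mul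
        (Real.continuous_exp.comp aux_cont_coord)).measurable
    exact h1.mul (aux_cont_coord.measurable.div continuous_norm.measurable)
  have hgint : Integrable (fun z : E2 => K₁ * ((1 + ‖z‖) * Real.exp (-‖z‖))) :=
    aux_g_integrable.const_mul K₁
  have hGbound : ∀ z : E2, |G z| ≤ K₁ * ((1 + ‖z‖) * Real.exp (-‖z‖)) := by
    intro z
    have hr0 : 0 ≤ ‖z‖ := norm_nonneg z
    have h1 : |G z| ≤ (w ‖z‖)^2 * |deriv w ‖z‖| * Real.exp (z 0) := by
      rw [hGdef]
      simp only
      rw [abs_mul, abs_mul, abs_mul, abs_of_nonneg (sq_nonneg (w ‖z‖)),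
        abs_of_pos (Real.exp_pos _)]
      calc (w ‖z‖)^2 * |deriv w ‖z‖| * Real.exp (z 0) * |z 0 / ‖z‖|
          ≤ (w ‖z‖)^2 * |deriv w ‖z‖| * Real.exp (z 0) * 1 :=
            mul_le_mul_of_nonneg_left (aux_coord_div_le z) (by positivity)
        _ = (w ‖z‖)^2 * |deriv w ‖z‖| * Real.exp (z 0) := mul_one _
    have h2 : Real.exp (z 0) ≤ Real.exp ‖z‖ :=
      Real.exp_le_exp.mpr (le_trans (le_abs_self _) (aux_coord_le z))
    have h3 : (w ‖z‖)^2 * |deriv w ‖z‖| * Real.exp (z 0)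
        ≤ (K₁ * Real.exp (-(3*‖z‖))) * Real.exp ‖z‖ :=
      mul_le_mul (hK₁b ‖z‖ hr0) h2 (Real.exp_pos _).le (by positivity)
    have h4 : (K₁ * Real.exp (-(3*‖z‖))) * Real.exp ‖z‖ ≤ K₁ * ((1 + ‖z‖) * Real.exp (-‖z‖)) := by
      rw [show (K₁ * Real.exp (-(3*‖z‖))) * Real.exp ‖z‖ = K₁ * (Real.exp (-(3*‖z‖)) * Real.exp ‖z‖) by ring]
      apply mul_le_mul_of_nonneg_left _ hK₁.le
      rw [← Real.exp_add]
      have h5 : Real.exp (-(3*‖z‖) + ‖z‖) ≤ Real.exp (-‖z‖) := Real.exp_le_exp.mpr (by linarith)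
      have h6 : Real.exp (-‖z‖) ≤ (1+‖z‖) * Real.exp (-‖z‖) :=
        le_mul_of_one_le_left (Real.exp_pos _).le (by linarith)
      linarith
    exact le_trans h1 (le_trans h3 h4)
  have hGint : Integrable G := by
    refine hgint.mono' hGmeas ?_
    filter_upwards with z
    rw [Real.norm_eq_abs]
    exact hGbound z
  -- the integral of G is negative
  have hGneg : (∫ z : E2, G z) < 0 :=
    aux_sign A₀ C hA₀ hC w hsm hpos hdec (fun {r} hr => hwb hr) hGint
  refine ⟨-(∫ z : E2, G z), by linarith, ?_⟩
  rw [neg_neg]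
  -- reduce to integral of the quotient
  have hred : (fun L : ℝ =>
      (∫ z : E2, (w ‖z‖)^2 * deriv w ‖z‖ * w ‖z + (-L) • (EuclideanSpace.single (0 : Fin 2) (1 : ℝ))‖ * (z 0 / ‖z‖)) / w L)
      = fun L : ℝ => ∫ z : E2,
        ((w ‖z‖)^2 * deriv w ‖z‖ * w ‖z + (-L) • (EuclideanSpace.single (0 : Fin 2) (1 : ℝ))‖ * (z 0 / ‖z‖)) / w L := by
    funext L
    rw [integral_div]
  rw [hred]
  -- dominated convergence
  set K₂ : ℝ := 8*K₁ + 2*K₁*(w 0)/A₀ with hK₂def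
  apply tendsto_integral_filter_of_dominated_convergence
    (bound := fun z : E2 => K₂ * ((1 + ‖z‖) * Real.exp (-‖z‖)))
  · -- measurability
    filter_upwards with L
    have h1 : Measurable fun z : E2 =>
        (w ‖z‖)^2 * deriv w ‖z‖ * w ‖z + (-L) • (EuclideanSpace.single (0 : Fin 2) (1 : ℝ))‖ :=
      ((((hwcont.comp continuous_norm).pow 2).mul (hw'cont.comp continuous_norm)).mul
        (hwcont.comp (continuous_norm.comp (continuous_id.add continuous_const)))).measurable
    exact ((h1.mul (aux_cont_coord.measurable.div
      continuous_norm.measurable)).div_const (w L)).aestronglyMeasurable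
  · -- uniform bound
    filter_upwards [Filter.eventually_ge_atTop (2*(1 + 2*C/A₀) + 2)] with L hL
    apply Filter.Eventually.of_forall
    intro z
    have hL0 : 0 < L := lt_of_lt_of_le (by positivity) hL
    have hwL : 0 < w L := hpos L hL0
    rw [Real.norm_eq_abs, abs_div, abs_of_pos hwL, div_le_iff₀ hwL]
    exact aux_dom A₀ C K₁ hA₀ hC hK₁ w (fun {r} hr => hwb hr) hanti hwnn hK₁b L hL z
  · -- integrability of the bound
    exact aux_g_integrable.const_mul K₂
  · -- pointwise convergence
    apply Filter.Eventually.of_forall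
    intro z
    have hratio := aux_ratio A₀ hA₀ w hpos hu (z 0) (z 1)
    set c : ℝ := (w ‖z‖)^2 * deriv w ‖z‖ * (z 0 / ‖z‖) with hcdef
    have hid : ∀ L : ℝ,
        ((w ‖z‖)^2 * deriv w ‖z‖ * w ‖z + (-L) • (EuclideanSpace.single (0 : Fin 2) (1 : ℝ))‖ * (z 0 / ‖z‖)) / w L
        = c * (w (Real.sqrt ((z 0 - L)^2 + (z 1)^2)) / w L) := by
      intro L
      rw [aux_norm_shift z L, hcdef]
      ring
    have hG : G z = c * Real.exp (z 0) := by rw [hGdef, hcdef]; ring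
    rw [hG]
    have := hratio.const_mul c
    apply this.congr
    intro L
    rw [hid L]
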